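/- Let K be a compact group of Q-orthogonal linear transformations of V acting transitively on a compact subset Ω of the projective space P(V) that spans V (i.e., representatives of Ω span V), and let H be a Q-selfadjoint endomorphism lying in a K-invariant-complement 𝔭 with 𝔭 ∩ ℝ·id = {0}. If the function f([x]) = Q(x, Hx)/Q(x) is constant on Ω and exp(tH)·Ω ⊆ Ω for all t ∈ ℝ, then H = 0. -/

import Mathlib

/-- No-constant-function lemma: let `S ⊆ V∖{0}` be a scale-stable set spanning
`V` (representing a subset `Ω` of projective space), and let `H` be a
`Q`-selfadjoint operator lying in a subspace `𝔭` with `𝔭 ∩ ℝ·id = 0`.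
If `[x] ↦ Q(x,Hx)/Q(x)` is constant on `Ω` and `Ω` is stable under
`exp(tH)` for all `t`, then `H = 0`. -/
theorem no_constant_function
    {V : Type*} [NormedAddCommGroup V] [NormedSpace ℝ V] [FiniteDimensional ℝ V]
    (Q : V →ₗ[ℝ] V →ₗ[ℝ] ℝ)
    (hsymm : ∀ x y, Q x y = Q y x) (hpos : ∀ x : V, x ≠ 0 → 0 < Q x x)
    (S : Set V) (hS0 : (0 : V) ∉ S)
    (hscale : ∀ x ∈ S, ∀ c : ℝ, c ≠ 0 → c • x ∈ S)
    (hspan : Submodule.span ℝ S = ⊤)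
    (𝔭 : Submodule ℝ (V →L[ℝ] V))
    (hsa : ∀ J ∈ 𝔭, ∀ x y, Q x (J y) = Q (J x) y)
    (hid : ∀ c : ℝ, c • (1 : V →L[ℝ] V) ∈ 𝔭 → c = 0)
    (H : V →L[ℝ] V) (hH : H ∈ 𝔭)
    (c : ℝ) (hconst : ∀ x ∈ S, Q x (H x) = c * Q x x)
    (hstable : ∀ t : ℝ, ∀ x ∈ S, NormedSpace.exp (t • H) x ∈ S) :
    H = 0 := by
  classical
  set A : V →L[ℝ] V := H - c • (1 : V →L[ℝ] V) with hAdef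
  have hAapp : ∀ x : V, A x = H x - c • x := by
    intro x
    simp [hAdef, ContinuousLinearMap.sub_apply, ContinuousLinearMap.smul_apply]
  -- Q x (A x) = 0 on S
  have key : ∀ x ∈ S, Q x (A x) = 0 := by
    intro x hx
    rw [hAapp]
    simp only [map_sub, map_smul]
    rw [hconst x hx]
    simp [smul_eq_mul]
  -- continuous bilinear version of Q
  let Q' : V →ₗ[ℝ] (V →L[ℝ] ℝ) :=
    (LinearMap.toContinuousLinearMap : (V →ₗ[ℝ] ℝ) ≃ₗ[ℝ] (V →L[ℝ] ℝ)).toLinearMap.comp Q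
  let B : V →L[ℝ] (V →L[ℝ] ℝ) := LinearMap.toContinuousLinearMap Q'
  have hB : ∀ x y : V, B x y = Q x y := fun x y => rfl
  -- A vanishes on S
  have hAzero : ∀ x ∈ S, A x = 0 := by
    intro x hx
    set u : ℝ → V := fun t => NormedSpace.exp (t • H) x with hu_def
    have hu : HasDerivAt u (H x) 0 := by
      have h1 : HasDerivAt (fun t : ℝ => NormedSpace.exp (t • H))
          (NormedSpace.exp ((0 : ℝ) • H) * H) 0 := hasDerivAt_exp_smul_const H 0
      have h2 := h1.clm_apply (hasDerivAt_const (0 : ℝ) x)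
      simpa [NormedSpace.exp_zero] using h2
    have hw : HasDerivAt (fun t => A (u t)) (A (H x)) 0 :=
      A.hasFDerivAt.comp_hasDerivAt 0 hu
    have hB1 : HasDerivAt (fun t => B (u t)) (B (H x)) 0 :=
      B.hasFDerivAt.comp_hasDerivAt 0 hu
    have hg : HasDerivAt (fun t => B (u t) (A (u t)))
        (B (H x) (A (u 0)) + B (u 0) (A (H x))) 0 := hB1.clm_apply hw
    have hu0 : u 0 = x := by simp [hu_def, NormedSpace.exp_zero]
    rw [hu0] at hg
    have hgzero : (fun t => B (u t) (A (u t))) = fun _ : ℝ => (0 : ℝ) := by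
      funext t
      rw [hB]
      exact key (u t) (hstable t x hx)
    rw [hgzero] at hg
    have hderiv : B (H x) (A x) + B x (A (H x)) = 0 :=
      hg.unique (hasDerivAt_const 0 0)
    rw [hB, hB] at hderiv
    -- rewrite both terms as Q (A x) (A x)
    have hsaA : ∀ y z, Q y (A z) = Q (A y) z := by
      intro y z
      simp only [hAapp, map_sub, map_smul, LinearMap.sub_apply, LinearMap.smul_apply,
        smul_eq_mul]
      rw [hsa H hH y z]
    have h1 : Q x (A (H x)) = Q (H x) (A x) := by
      rw [hsaA x (H x), hsymm]
    rw [h1] at hderiv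
    have h2 : Q (H x) (A x) = Q (A x) (A x) := by
      have hHx : H x = A x + c • x := by rw [hAapp]; abel
      rw [hHx, map_add, map_smul, LinearMap.add_apply, LinearMap.smul_apply, smul_eq_mul,
        key x hx]
      ring
    rw [h2] at hderiv
    have hQ0 : Q (A x) (A x) = 0 := by linarith
    by_contra hne
    exact absurd hQ0 (ne_of_gt (hpos (A x) hne))
  -- A vanishes everywhere
  have hA : A = 0 := by
    ext v
    have hv : v ∈ Submodule.span ℝ S := hspan ▸ Submodule.mem_top
    induction hv using Submodule.span_induction with
    | mem y hy => simpa using hAzero y hy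
    | zero => simp
    | add y z _ _ hy hz => simp [map_add, hy, hz]
    | smul a y _ hy => simp [map_smul, hy]
  have hHc : H = c • (1 : V →L[ℝ] V) := by
    have := sub_eq_zero.mp hA
    exact this
  have hc0 : c = 0 := hid c (hHc ▸ hH)
  rw [hHc, hc0, zero_smul]
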